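/- Tsirelson's bound: for any quantum state ρ on a bipartite Hilbert space H_A ⊗ H_B and Hermitian observables A₀, A₁ on H_A and B₀, B₁ on H_B with operator norms ≤ 1 (eigenvalues in [−1,1]), the CHSH operator S = A₀⊗B₀ + A₀⊗B₁ + A₁⊗B₀ − A₁⊗B₁ satisfies |Tr(ρ S)| ≤ 2√2. -/

import Mathlib

open Kronecker ComplexOrder

namespace TsirelsonAux

open Matrix

variable {n m : Type*} [Fintype n] [Fintype m] [DecidableEq n] [DecidableEq m]

omit [Fintype n] [Fintype m] [DecidableEq n] [DecidableEq m] in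
lemma kron_conjTranspose (A : Matrix n n ℂ) (B : Matrix m m ℂ) :
    (A ⊗ₖ B)ᴴ = Aᴴ ⊗ₖ Bᴴ := by
  ext ⟨i, j⟩ ⟨k, l⟩
  simp [conjTranspose_apply, mul_comm]

lemma sub_kron {a b c d : Type*} (A B : Matrix a b ℂ) (C : Matrix c d ℂ) :
    (A - B) ⊗ₖ C = A ⊗ₖ C - B ⊗ₖ C := by
  ext ⟨i, j⟩ ⟨k, l⟩
  simp [sub_mul]

lemma kron_sub {a b c d : Type*} (A : Matrix a b ℂ) (B C : Matrix c d ℂ) :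
    A ⊗ₖ (B - C) = A ⊗ₖ B - A ⊗ₖ C := by
  ext ⟨i, j⟩ ⟨k, l⟩
  simp [mul_sub]

lemma kron_neg {a b c d : Type*} (A : Matrix a b ℂ) (B : Matrix c d ℂ) :
    A ⊗ₖ (-B) = -(A ⊗ₖ B) := by
  ext ⟨i, j⟩ ⟨k, l⟩
  simp

lemma kron_posSemidef {A : Matrix n n ℂ} {B : Matrix m m ℂ}
    (hA : A.PosSemidef) (hB : B.PosSemidef) : (A ⊗ₖ B).PosSemidef := by
  obtain ⟨C, hC⟩ : ∃ C : Matrix n n ℂ, A = Cᴴ * C := by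
    open scoped MatrixOrder in exact CStarAlgebra.nonneg_iff_eq_star_mul_self.mp hA.nonneg
  obtain ⟨D, hD⟩ : ∃ D : Matrix m m ℂ, B = Dᴴ * D := by
    open scoped MatrixOrder in exact CStarAlgebra.nonneg_iff_eq_star_mul_self.mp hB.nonneg
  have : A ⊗ₖ B = (C ⊗ₖ D)ᴴ * (C ⊗ₖ D) := by
    rw [kron_conjTranspose, ← mul_kronecker_mul, ← hC, ← hD]
  rw [this]
  exact posSemidef_conjTranspose_mul_self _

lemma psd_smul {k : Type*} [Fintype k] {M : Matrix k k ℂ} (hM : M.PosSemidef)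
    {c : ℝ} (hc : 0 ≤ c) : ((c : ℂ) • M).PosSemidef := by
  refine ⟨?_, fun x => ?_⟩
  · unfold Matrix.IsHermitian
    rw [conjTranspose_smul, hM.1.eq]
    simp [Complex.star_def]
  · have := hM.2 x
    simpa [Finsupp.mul_sum, mul_left_comm, mul_assoc] using
      mul_nonneg (by exact_mod_cast hc : (0 : ℂ) ≤ c) this

lemma psd_trace_nonneg {k : Type*} [Fintype k] [DecidableEq k] {M : Matrix k k ℂ}
    (hM : M.PosSemidef) : 0 ≤ M.trace := by
  rw [trace]
  refine Finset.sum_nonneg fun i _ => ?_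
  have := hM.diag_nonneg (i := i)
  simpa [mulVec_single, dotProduct, Pi.single_apply, diag] using this

lemma psd_trace_mul_nonneg {k : Type*} [Fintype k] [DecidableEq k] {P M : Matrix k k ℂ}
    (hP : P.PosSemidef) (hM : M.PosSemidef) : 0 ≤ (P * M).trace := by
  obtain ⟨C, hC⟩ : ∃ C : Matrix k k ℂ, P = Cᴴ * C := by
    open scoped MatrixOrder in exact CStarAlgebra.nonneg_iff_eq_star_mul_self.mp hP.nonneg
  rw [hC, Matrix.mul_assoc, trace_mul_comm]
  exact psd_trace_nonneg (hM.mul_mul_conjTranspose_same C)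

lemma chsh_psd (A₀ A₁ : Matrix n n ℂ) (B₀ B₁ : Matrix m m ℂ)
    (hA₀ : A₀.IsHermitian) (hA₁ : A₁.IsHermitian)
    (hB₀ : B₀.IsHermitian) (hB₁ : B₁.IsHermitian)
    (hA₀sq : (1 - A₀ * A₀).PosSemidef) (hA₁sq : (1 - A₁ * A₁).PosSemidef)
    (hB₀sq : (1 - B₀ * B₀).PosSemidef) (hB₁sq : (1 - B₁ * B₁).PosSemidef) :
    (((2 * Real.sqrt 2 : ℝ) : ℂ) • (1 : Matrix (n × m) (n × m) ℂ)
      - (A₀ ⊗ₖ B₀ + A₀ ⊗ₖ B₁ + A₁ ⊗ₖ B₀ - A₁ ⊗ₖ B₁)).PosSemidef := by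
  set r : ℝ := Real.sqrt 2 with hr
  have h2 : (r : ℂ) * (r : ℂ) = 2 := by
    rw [← Complex.ofReal_mul, Real.mul_self_sqrt (by norm_num)]
    norm_num
  set T : Matrix (n × m) (n × m) ℂ :=
    (A₀ + A₁) ⊗ₖ (1 : Matrix m m ℂ) - (r : ℂ) • ((1 : Matrix n n ℂ) ⊗ₖ B₀) with hT
  set U : Matrix (n × m) (n × m) ℂ :=
    (A₀ - A₁) ⊗ₖ (1 : Matrix m m ℂ) - (r : ℂ) • ((1 : Matrix n n ℂ) ⊗ₖ B₁) with hU
  have hTh : Tᴴ = T := by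
    rw [hT]
    simp [conjTranspose_sub, conjTranspose_smul, kron_conjTranspose, conjTranspose_add,
      hA₀.eq, hA₁.eq, hB₀.eq, Complex.star_def, Complex.conj_ofReal]
  have hUh : Uᴴ = U := by
    rw [hU]
    simp [conjTranspose_sub, conjTranspose_smul, kron_conjTranspose,
      hA₀.eq, hA₁.eq, hB₁.eq, Complex.star_def, Complex.conj_ofReal]
  have key : (8 : ℂ) • (1 : Matrix (n × m) (n × m) ℂ)
        - ((2 * r : ℝ) : ℂ) • (A₀ ⊗ₖ B₀ + A₀ ⊗ₖ B₁ + A₁ ⊗ₖ B₀ - A₁ ⊗ₖ B₁) =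
      ((2 : ℝ) : ℂ) • ((1 - A₀ * A₀) ⊗ₖ (1 : Matrix m m ℂ))
      + ((2 : ℝ) : ℂ) • ((1 - A₁ * A₁) ⊗ₖ (1 : Matrix m m ℂ))
      + ((2 : ℝ) : ℂ) • ((1 : Matrix n n ℂ) ⊗ₖ (1 - B₀ * B₀))
      + ((2 : ℝ) : ℂ) • ((1 : Matrix n n ℂ) ⊗ₖ (1 - B₁ * B₁))
      + Tᴴ * T + Uᴴ * U := by
    rw [hTh, hUh]
    push_cast
    rw [hT, hU]
    simp only [Matrix.sub_mul, Matrix.mul_sub, Matrix.add_mul, Matrix.mul_add,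
      Matrix.smul_mul, Matrix.mul_smul, smul_sub, smul_add, smul_smul,
      ← mul_kronecker_mul, Matrix.one_mul, Matrix.mul_one,
      Matrix.add_kronecker, Matrix.kronecker_add, sub_kron, kron_sub,
      one_kronecker_one, h2]
    module
  have hrpos : (0 : ℝ) < 2 * r := by
    have : (0 : ℝ) < r := Real.sqrt_pos.mpr (by norm_num)
    linarith
  have h8 : ((2 * r : ℝ) : ℂ) * ((2 * r : ℝ) : ℂ) = 8 := by
    push_cast
    linear_combination (4 : ℂ) * h2
  have hscale : ((2 * r : ℝ) : ℂ) • (((2 * r : ℝ) : ℂ) • (1 : Matrix (n × m) (n × m) ℂ)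
        - (A₀ ⊗ₖ B₀ + A₀ ⊗ₖ B₁ + A₁ ⊗ₖ B₀ - A₁ ⊗ₖ B₁)) =
      ((2 : ℝ) : ℂ) • ((1 - A₀ * A₀) ⊗ₖ (1 : Matrix m m ℂ))
      + ((2 : ℝ) : ℂ) • ((1 - A₁ * A₁) ⊗ₖ (1 : Matrix m m ℂ))
      + ((2 : ℝ) : ℂ) • ((1 : Matrix n n ℂ) ⊗ₖ (1 - B₀ * B₀))
      + ((2 : ℝ) : ℂ) • ((1 : Matrix n n ℂ) ⊗ₖ (1 - B₁ * B₁))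
      + Tᴴ * T + Uᴴ * U := by
    rw [smul_sub, smul_smul, h8, key]
  have hRHS : (((2 : ℝ) : ℂ) • ((1 - A₀ * A₀) ⊗ₖ (1 : Matrix m m ℂ))
      + ((2 : ℝ) : ℂ) • ((1 - A₁ * A₁) ⊗ₖ (1 : Matrix m m ℂ))
      + ((2 : ℝ) : ℂ) • ((1 : Matrix n n ℂ) ⊗ₖ (1 - B₀ * B₀))
      + ((2 : ℝ) : ℂ) • ((1 : Matrix n n ℂ) ⊗ₖ (1 - B₁ * B₁))
      + Tᴴ * T + Uᴴ * U).PosSemidef := by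
    refine (((((psd_smul (kron_posSemidef hA₀sq Matrix.PosSemidef.one) (by norm_num)).add
      (psd_smul (kron_posSemidef hA₁sq Matrix.PosSemidef.one) (by norm_num))).add
      (psd_smul (kron_posSemidef Matrix.PosSemidef.one hB₀sq) (by norm_num))).add
      (psd_smul (kron_posSemidef Matrix.PosSemidef.one hB₁sq) (by norm_num))).add
      (Matrix.posSemidef_conjTranspose_mul_self T)).add
      (Matrix.posSemidef_conjTranspose_mul_self U)
  have hid : (((2 * r : ℝ) : ℂ) • (1 : Matrix (n × m) (n × m) ℂ)
        - (A₀ ⊗ₖ B₀ + A₀ ⊗ₖ B₁ + A₁ ⊗ₖ B₀ - A₁ ⊗ₖ B₁)) =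
      (((2 * r)⁻¹ : ℝ) : ℂ) • (((2 * r : ℝ) : ℂ) •
        (((2 * r : ℝ) : ℂ) • (1 : Matrix (n × m) (n × m) ℂ)
        - (A₀ ⊗ₖ B₀ + A₀ ⊗ₖ B₁ + A₁ ⊗ₖ B₀ - A₁ ⊗ₖ B₁))) := by
    rw [smul_smul, ← Complex.ofReal_mul, inv_mul_cancel₀ hrpos.ne', Complex.ofReal_one, one_smul]
  rw [hid, hscale]
  exact psd_smul hRHS (inv_nonneg.mpr hrpos.le)

end TsirelsonAux

/-- Tsirelson's bound: for a bipartite quantum state `ρ` and Hermitian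
observables `A₀, A₁, B₀, B₁` with eigenvalues in `[-1,1]` (expressed as
`1 - A² ⪰ 0`), the expectation of the CHSH operator is at most `2√2` in
absolute value. -/
theorem tsirelson_bound
    {n m : Type*} [Fintype n] [Fintype m] [DecidableEq n] [DecidableEq m]
    (ρ : Matrix (n × m) (n × m) ℂ)
    (hρ : ρ.PosSemidef) (hρtr : ρ.trace = 1)
    (A₀ A₁ : Matrix n n ℂ) (B₀ B₁ : Matrix m m ℂ)
    (hA₀ : A₀.IsHermitian) (hA₁ : A₁.IsHermitian)
    (hB₀ : B₀.IsHermitian) (hB₁ : B₁.IsHermitian)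
    (hA₀sq : (1 - A₀ * A₀).PosSemidef) (hA₁sq : (1 - A₁ * A₁).PosSemidef)
    (hB₀sq : (1 - B₀ * B₀).PosSemidef) (hB₁sq : (1 - B₁ * B₁).PosSemidef) :
    ‖(ρ * (A₀ ⊗ₖ B₀ + A₀ ⊗ₖ B₁ + A₁ ⊗ₖ B₀ - A₁ ⊗ₖ B₁)).trace‖
      ≤ 2 * Real.sqrt 2 := by
  set S : Matrix (n × m) (n × m) ℂ := A₀ ⊗ₖ B₀ + A₀ ⊗ₖ B₁ + A₁ ⊗ₖ B₀ - A₁ ⊗ₖ B₁ with hS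
  set c : ℂ := ((2 * Real.sqrt 2 : ℝ) : ℂ) with hc
  have hpos : (c • 1 - S).PosSemidef :=
    TsirelsonAux.chsh_psd A₀ A₁ B₀ B₁ hA₀ hA₁ hB₀ hB₁ hA₀sq hA₁sq hB₀sq hB₁sq
  have hneg' := TsirelsonAux.chsh_psd A₀ A₁ (-B₀) (-B₁) hA₀ hA₁ hB₀.neg hB₁.neg
    hA₀sq hA₁sq (by rwa [neg_mul_neg]) (by rwa [neg_mul_neg])
  have hflip : A₀ ⊗ₖ (-B₀) + A₀ ⊗ₖ (-B₁) + A₁ ⊗ₖ (-B₀) - A₁ ⊗ₖ (-B₁) = -S := by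
    rw [hS]
    simp only [TsirelsonAux.kron_neg]
    abel
  rw [hflip, sub_neg_eq_add] at hneg'
  have h1 : 0 ≤ (ρ * (c • 1 - S)).trace := TsirelsonAux.psd_trace_mul_nonneg hρ hpos
  have h2 : 0 ≤ (ρ * (c • 1 + S)).trace := TsirelsonAux.psd_trace_mul_nonneg hρ hneg'
  rw [Matrix.mul_sub, Matrix.trace_sub, Matrix.mul_smul, Matrix.trace_smul, Matrix.mul_one,
    hρtr, smul_eq_mul, mul_one] at h1
  rw [Matrix.mul_add, Matrix.trace_add, Matrix.mul_smul, Matrix.trace_smul, Matrix.mul_one,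
    hρtr, smul_eq_mul, mul_one] at h2
  set z : ℂ := (ρ * S).trace with hz
  have hle1 : z ≤ c := sub_nonneg.mp h1
  have hle2 : -c ≤ z := by
    rw [neg_le_iff_add_nonneg, add_comm]
    exact h2
  obtain ⟨hre1, him1⟩ := Complex.le_def.mp hle1
  obtain ⟨hre2, him2⟩ := Complex.le_def.mp hle2
  have himz : z.im = 0 := by simpa [hc] using him1
  have hzre : z = ((z.re : ℝ) : ℂ) := Complex.ext rfl (by simp [himz])
  rw [hzre, Complex.norm_real, Real.norm_eq_abs]
  refine abs_le.mpr ⟨?_, ?_⟩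
  · have : (-c).re ≤ z.re := hre2
    simpa [hc] using this
  · simpa [hc] using hre1
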